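/- Let r ≥ 2 be a natural number and n = F_0 a natural number. If X_w is a binomial-type count with E(X_w) = (f/2^w)(1 - 1/(r·2^w))^{n-1}, then E(X_w) ≤ (f/2^w)·(r/(r-1))·exp(-n/(r·2^w)) and E(X_w) ≥ (f/2^w)·exp(-θ n/(r·2^w)) where θ = r/(r-1), provided 1/(r·2^w) ≤ 2(θ-1)/θ². -/

import Mathlib

/-- Bounds `L(w) ≤ E(X_w) ≤ H(w)` where `E(X_w) = (f/2^w)(1 - 1/(r·2^w))^{n-1}`,
`L(w) = (f/2^w)·exp(-θn/(r·2^w))`, `H(w) = (f/2^w)·θ·exp(-n/(r·2^w))`,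
`θ = r/(r-1)`, provided `r ≥ 2`, `n ≥ 1` and `1/(r·2^w) ≤ 2(θ-1)/θ²`. -/
theorem stmt_3 (r n w : ℕ) (hr : 2 ≤ r) (hn : 1 ≤ n) (f : ℝ) (hf : 0 < f)
    (θ : ℝ) (hθ : θ = (r : ℝ) / ((r : ℝ) - 1))
    (h : 1 / ((r : ℝ) * 2 ^ w) ≤ 2 * (θ - 1) / θ ^ 2) :
    f / 2 ^ w * Real.exp (-(θ * n / ((r : ℝ) * 2 ^ w))) ≤
        f / 2 ^ w * (1 - 1 / ((r : ℝ) * 2 ^ w)) ^ (n - 1) ∧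
      f / 2 ^ w * (1 - 1 / ((r : ℝ) * 2 ^ w)) ^ (n - 1) ≤
        f / 2 ^ w * θ * Real.exp (-((n : ℝ) / ((r : ℝ) * 2 ^ w))) := by
  have h2w : (0:ℝ) < 2 ^ w := by positivity
  have h2w1 : (1:ℝ) ≤ 2 ^ w := one_le_pow₀ (by norm_num)
  have hr1 : (1:ℝ) < r := by exact_mod_cast (by omega : 1 < r)
  have hrpos : (0:ℝ) < r := by linarith
  set x : ℝ := 1 / ((r:ℝ) * 2 ^ w) with hx
  have hxpos : 0 < x := by positivity
  have hxr : x ≤ 1 / r := by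
    rw [hx]
    apply one_div_le_one_div_of_le hrpos
    nlinarith
  have hθ1 : 1 < θ := by
    rw [hθ, lt_div_iff₀ (by linarith)]; linarith
  have hθx : θ * x ≤ θ - 1 := by
    have h1 : θ * x ≤ θ * (1 / r) :=
      mul_le_mul_of_nonneg_left hxr (by linarith)
    have h2 : θ * (1 / r) = θ - 1 := by
      have hne : (r:ℝ) - 1 ≠ 0 := by linarith
      have hne2 : (r:ℝ) ≠ 0 := by linarith
      rw [hθ]; field_simp; ring
    linarith
  have hx1 : x < 1 := lt_of_le_of_lt hxr (by rw [div_lt_one hrpos]; linarith)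
  have hxlt : 0 < 1 - x := by linarith
  -- key lower: exp(-(θx)) ≤ 1 - x
  have key1 : Real.exp (-(θ * x)) ≤ 1 - x := by
    have h1 : θ * x + 1 ≤ Real.exp (θ * x) := Real.add_one_le_exp _
    have hmul : Real.exp (-(θ * x)) * Real.exp (θ * x) = 1 := by
      rw [← Real.exp_add]; simp
    nlinarith [Real.exp_pos (θ * x), Real.exp_pos (-(θ * x))]
  -- key upper: 1 - x ≤ exp(-x)
  have key2 : 1 - x ≤ Real.exp (-x) := by
    have := Real.add_one_le_exp (-x); linarith
  have hex : Real.exp x ≤ θ := by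
    have hmul : Real.exp x * Real.exp (-x) = 1 := by
      rw [← Real.exp_add]; simp
    -- exp x * (1-x) ≤ 1 ≤ θ (1-x)
    have h1 : Real.exp x * (1 - x) ≤ 1 := by
      nlinarith [Real.exp_pos x]
    have h2 : 1 ≤ θ * (1 - x) := by nlinarith
    nlinarith
  constructor
  · -- lower bound
    have e1 : Real.exp (-(θ * n / ((r:ℝ) * 2 ^ w))) = Real.exp (-(θ * x)) ^ n := by
      rw [← Real.exp_nat_mul]
      congr 1
      rw [hx]; field_simp
    have e2 : Real.exp (-(θ * x)) ^ n ≤ (1 - x) ^ n :=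
      pow_le_pow_left₀ (Real.exp_nonneg _) key1 n
    have e3 : (1 - x) ^ n ≤ (1 - x) ^ (n - 1) :=
      pow_le_pow_of_le_one hxlt.le (by linarith) (Nat.sub_le n 1)
    have hpos : (0:ℝ) < f / 2 ^ w := by positivity
    rw [e1]
    exact mul_le_mul_of_nonneg_left (le_trans e2 e3) hpos.le
  · -- upper bound
    have e1 : (1 - x) ^ (n - 1) ≤ Real.exp (-x) ^ (n - 1) :=
      pow_le_pow_left₀ hxlt.le key2 _
    have e2 : Real.exp (-x) ^ (n - 1) = Real.exp (-(x * (n - 1 : ℕ))) := by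
      rw [← Real.exp_nat_mul]; ring_nf
    have e3 : ((n - 1 : ℕ) : ℝ) = (n : ℝ) - 1 := by
      rw [Nat.cast_sub hn]; norm_num
    have e4 : Real.exp (-(x * (n - 1 : ℕ))) = Real.exp (-((n:ℝ) * x)) * Real.exp x := by
      rw [← Real.exp_add, e3]; ring_nf
    have e5 : Real.exp (-((n:ℝ) * x)) * Real.exp x ≤ θ * Real.exp (-((n:ℝ) * x)) := by
      have := mul_le_mul_of_nonneg_left hex (Real.exp_nonneg (-((n:ℝ) * x)))
      linarith
    have e6 : Real.exp (-((n:ℝ) * x)) = Real.exp (-((n : ℝ) / ((r:ℝ) * 2 ^ w))) := by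
      congr 1; rw [hx]; field_simp
    have hpos : (0:ℝ) < f / 2 ^ w := by positivity
    calc f / 2 ^ w * (1 - x) ^ (n - 1)
        ≤ f / 2 ^ w * (θ * Real.exp (-((n:ℝ) * x))) := by
          apply mul_le_mul_of_nonneg_left _ hpos.le
          calc (1 - x) ^ (n - 1) ≤ Real.exp (-x) ^ (n - 1) := e1
            _ = Real.exp (-((n:ℝ) * x)) * Real.exp x := by rw [e2, e4]
            _ ≤ θ * Real.exp (-((n:ℝ) * x)) := e5
      _ = f / 2 ^ w * θ * Real.exp (-((n : ℝ) / ((r:ℝ) * 2 ^ w))) := by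
          rw [e6]; ring
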